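/- arXiv:1412.3676 — 2 statements merged into one kernel-verified Lean document; each statement's English description precedes it below -/
import Mathlib

section
/- Let f₂ : ℝ → ℝ be defined by f₂(λ) := λ² for λ ≥ 0 and f₂(λ) := 0 for λ < 0. Let ρ1 be a density matrix and ρ2 a positive definite density matrix of the same finite size, and let T0 be the Hermitian matrix solving the Lyapunov equation (T0·ρ2 + ρ2·T0)/4 = ρ1 (explicitly, T0 = 4∫_{−∞}^0 e^{sρ2} ρ1 e^{sρ2} ds). Then T0 ≥ 0 and D_{f₂}^min(ρ1‖ρ2) = (1/4)·tr(ρ2·T0²) = (1/2)·tr(ρ1·T0). -/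
open Filter Matrix
open scoped ComplexOrder
open scoped BigOperators

noncomputable section

attribute [local instance] Classical.propDecidable

/-- The effective domain of an extended-real-valued function. -/
def edom (f : ℝ → EReal) : Set ℝ := {x | f x < ⊤}

/-- The convex conjugate `f*`(t) = sup_λ (t·λ − f(λ)). -/
def econj (f : ℝ → EReal) (t : ℝ) : EReal := ⨆ l : ℝ, ((t * l : ℝ) : EReal) - f l

/-- The function `g` associated to `f`, i.e. the lsc positively homogeneous
extension of `(λ1,λ2) ↦ λ2 f(λ1/λ2)`. -/
def gfun (f : ℝ → EReal) (l1 l2 : ℝ) : EReal :=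
  if l1 = 0 ∧ l2 = 0 then 0
  else if l1 ∈ edom f ∧ 0 < l2 then ((l2 : ℝ) : EReal) * f (l1 / l2)
  else if l1 ∈ edom f ∧ l2 = 0 then
    limUnder (nhdsWithin 0 (Set.Ioi 0)) fun u : ℝ => ((u : ℝ) : EReal) * f (l1 / u)
  else ⊤

/-- A finite-outcome POVM. -/
def IsPOVM {n m : ℕ} (M : Fin m → Matrix (Fin n) (Fin n) ℂ) : Prop :=
  (∀ x, (M x).PosSemidef) ∧ ∑ x, M x = 1

/-- The maximized measured f-divergence `D_f^min`. -/
def Dfmin (f : ℝ → EReal) {n : ℕ} (ρ1 ρ2 : Matrix (Fin n) (Fin n) ℂ) : EReal :=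
  ⨆ (m : ℕ) (M : Fin m → Matrix (Fin n) (Fin n) ℂ) (_ : IsPOVM M),
    ∑ x, gfun f ((ρ1 * M x).trace.re) ((ρ2 * M x).trace.re)

/-- Functional calculus on a Hermitian matrix: apply `h` to the eigenvalues. -/
def hermFC {k : ℕ} (h : ℝ → ℝ) {A : Matrix (Fin k) (Fin k) ℂ} (hA : A.IsHermitian) :
    Matrix (Fin k) (Fin k) ℂ :=
  (hA.eigenvectorUnitary : Matrix (Fin k) (Fin k) ℂ) *
    Matrix.diagonal (fun i => (h (hA.eigenvalues i) : ℂ)) *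
    (star (hA.eigenvectorUnitary : Matrix (Fin k) (Fin k) ℂ))

/-- The spectrum of the Hermitian matrix `A` is contained in `S`. -/
def specIn {k : ℕ} {A : Matrix (Fin k) (Fin k) ℂ} (hA : A.IsHermitian) (S : Set ℝ) : Prop :=
  ∀ i, hA.eigenvalues i ∈ S

/-- The Loewner order: `A ≤ B`. -/
def Loewner {k : ℕ} (A B : Matrix (Fin k) (Fin k) ℂ) : Prop := (B - A).PosSemidef

/-- Operator convexity of a real function on a set `S` (midpoint form, via
the functional calculus on Hermitian matrices with spectrum in `S`). -/
def OpConvexOn (h : ℝ → ℝ) (S : Set ℝ) : Prop :=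
  ∀ (k : ℕ), 1 ≤ k → ∀ (A B : Matrix (Fin k) (Fin k) ℂ)
    (hA : A.IsHermitian) (hB : B.IsHermitian) (hM : ((1/2 : ℂ) • (A + B)).IsHermitian),
    specIn hA S → specIn hB S →
    Loewner (hermFC h hM) ((1/2 : ℂ) • (hermFC h hA + hermFC h hB))

/-- The real-valued version of the convex conjugate of `f` (used for the
functional calculus; on `dom f*` it agrees with `f*` when `f` is proper). -/
def econjR (f : ℝ → EReal) (t : ℝ) : ℝ := (econj f t).toReal

/-- Condition (I): `f*` is operator convex on its effective domain. -/
def CondI (f : ℝ → EReal) : Prop := OpConvexOn (econjR f) (edom (econj f))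

/-- `f` is a proper lower semicontinuous convex function with `dom f ⊇ (0,∞)`. -/
structure NiceF (f : ℝ → EReal) : Prop where
  ne_bot : ∀ x, f x ≠ ⊥
  ne_top : ∃ x, f x ≠ ⊤
  lsc : LowerSemicontinuous f
  convex : ∀ x y a b : ℝ, 0 ≤ a → 0 ≤ b → a + b = 1 →
    f (a * x + b * y) ≤ ((a : ℝ) : EReal) * f x + ((b : ℝ) : EReal) * f y
  dom : Set.Ioi (0 : ℝ) ⊆ edom f

/-- `f₂(λ) = λ²` for `λ ≥ 0`, `f₂(λ) = 0` for `λ < 0`. -/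
def ftwo : ℝ → EReal := fun l => (((if 0 ≤ l then l ^ 2 else 0) : ℝ) : EReal)

section PsdSqrt
open scoped MatrixOrder

def Matrix.PosSemidef.sqrt {k : ℕ} {A : Matrix (Fin k) (Fin k) ℂ} (_ : A.PosSemidef) :
    Matrix (Fin k) (Fin k) ℂ := CFC.sqrt A

lemma Matrix.PosSemidef.posSemidef_sqrt {k : ℕ} {A : Matrix (Fin k) (Fin k) ℂ}
    (hA : A.PosSemidef) : hA.sqrt.PosSemidef :=
  (CFC.sqrt_nonneg A).posSemidef

lemma Matrix.PosSemidef.sqrt_mul_self {k : ℕ} {A : Matrix (Fin k) (Fin k) ℂ}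
    (hA : A.PosSemidef) : hA.sqrt * hA.sqrt = A :=
  CFC.sqrt_mul_sqrt_self A hA.nonneg

end PsdSqrt

namespace Stmt13Aux

lemma ereal_coe_sum {ι : Type*} (s : Finset ι) (f : ι → ℝ) :
    ∑ x ∈ s, ((f x : ℝ) : EReal) = ((∑ x ∈ s, f x : ℝ) : EReal) :=
  (map_sum (⟨⟨Real.toEReal, EReal.coe_zero⟩, EReal.coe_add⟩ : ℝ →+ EReal) f s).symm

lemma mem_edom_ftwo (x : ℝ) : x ∈ edom ftwo := by
  simp only [edom, ftwo, Set.mem_setOf_eq]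
  exact EReal.coe_lt_top _

lemma gfun_ftwo_zero : gfun ftwo 0 0 = 0 := by
  unfold gfun; rw [if_pos ⟨rfl, rfl⟩]

lemma gfun_ftwo_pos {p q : ℝ} (hp : 0 ≤ p) (hq : 0 < q) :
    gfun ftwo p q = ((p ^ 2 / q : ℝ) : EReal) := by
  unfold gfun
  rw [if_neg (fun h => hq.ne' h.2), if_pos ⟨mem_edom_ftwo p, hq⟩]
  unfold ftwo
  rw [if_pos (div_nonneg hp hq.le), ← EReal.coe_mul, EReal.coe_eq_coe_iff]
  field_simp

lemma psd_trace_nonneg {k : ℕ} {A : Matrix (Fin k) (Fin k) ℂ} (hA : A.PosSemidef) :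
    0 ≤ A.trace := by
  have h : ∀ i, 0 ≤ A i i := fun i => hA.diag_nonneg
  exact Finset.sum_nonneg fun i _ => h i

lemma trace_mul_psd_nonneg {k : ℕ} {A B : Matrix (Fin k) (Fin k) ℂ}
    (hA : A.PosSemidef) (hB : B.PosSemidef) : 0 ≤ (A * B).trace := by
  have hRh : hB.sqrt.conjTranspose = hB.sqrt := hB.posSemidef_sqrt.1
  have key : (A * B).trace = (hB.sqrt * A * hB.sqrt).trace := by
    conv_lhs => rw [← hB.sqrt_mul_self]
    rw [← Matrix.mul_assoc, Matrix.trace_mul_comm (A * hB.sqrt) hB.sqrt, ← Matrix.mul_assoc]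
  rw [key]
  exact psd_trace_nonneg (by simpa [hRh] using hA.mul_mul_conjTranspose_same hB.sqrt)

lemma trace_rot {k : ℕ} (R Z : Matrix (Fin k) (Fin k) ℂ) :
    (R * Z * R).trace = (Z * (R * R)).trace := by
  rw [Matrix.mul_assoc, Matrix.trace_mul_comm R (Z * R), Matrix.mul_assoc]

lemma trace_CS {k : ℕ} (Y X : Matrix (Fin k) (Fin k) ℂ) :
    ((Yᴴ * X).trace.re) ^ 2 ≤ (Yᴴ * Y).trace.re * (Xᴴ * X).trace.re := by
  have habs : ∀ W V : Matrix (Fin k) (Fin k) ℂ, (Wᴴ * V).trace =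
      ∑ p : Fin k × Fin k, (starRingEnd ℂ) (W p.2 p.1) * V p.2 p.1 := by
    intro W V
    rw [Fintype.sum_prod_type]
    simp [Matrix.trace, Matrix.diag, Matrix.mul_apply, Matrix.conjTranspose_apply]
  have hsq : ∀ W : Matrix (Fin k) (Fin k) ℂ,
      (Wᴴ * W).trace.re = ∑ p : Fin k × Fin k, ‖W p.2 p.1‖ ^ 2 := by
    intro W
    rw [habs, Complex.re_sum]
    refine Finset.sum_congr rfl fun p _ => ?_
    rw [mul_comm, Complex.mul_conj]
    simp [Complex.sq_norm]
  have hle : |(Yᴴ * X).trace.re| ≤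
      ∑ p : Fin k × Fin k, ‖Y p.2 p.1‖ * ‖X p.2 p.1‖ := by
    calc |(Yᴴ * X).trace.re| ≤ ‖(Yᴴ * X).trace‖ := Complex.abs_re_le_norm _
      _ ≤ ∑ p : Fin k × Fin k, ‖(starRingEnd ℂ) (Y p.2 p.1) * X p.2 p.1‖ := by
          rw [habs]; exact norm_sum_le _ _
      _ = _ := by simp [_root_.map_mul]
  have hcs := Finset.sum_mul_sq_le_sq_mul_sq Finset.univ
      (fun p : Fin k × Fin k => ‖Y p.2 p.1‖)
      (fun p => ‖X p.2 p.1‖)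
  calc ((Yᴴ * X).trace.re) ^ 2 = |(Yᴴ * X).trace.re| ^ 2 := (sq_abs _).symm
    _ ≤ (∑ p : Fin k × Fin k, ‖Y p.2 p.1‖ * ‖X p.2 p.1‖) ^ 2 :=
        pow_le_pow_left₀ (abs_nonneg _) hle 2
    _ ≤ (∑ p : Fin k × Fin k, ‖Y p.2 p.1‖ ^ 2) *
        (∑ p : Fin k × Fin k, ‖X p.2 p.1‖ ^ 2) := hcs
    _ = _ := by rw [hsq, hsq]

end Stmt13Aux

open Stmt13Aux

/-- closed formula for `D_{f₂}^min` via the solution `T0` of the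
Lyapunov equation `(T0 ρ2 + ρ2 T0)/4 = ρ1`. -/
theorem stmt_13 {n : ℕ} (ρ1 ρ2 : Matrix (Fin n) (Fin n) ℂ)
    (h1 : ρ1.PosSemidef) (h1t : ρ1.trace = 1) (h2 : ρ2.PosDef) (h2t : ρ2.trace = 1)
    (T0 : Matrix (Fin n) (Fin n) ℂ) (hT0 : T0.IsHermitian)
    (hLyap : (1/4 : ℂ) • (T0 * ρ2 + ρ2 * T0) = ρ1) :
    T0.PosSemidef ∧
    Dfmin ftwo ρ1 ρ2 = (((1/4 : ℝ) * (ρ2 * (T0 * T0)).trace.re : ℝ) : EReal) ∧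
    Dfmin ftwo ρ1 ρ2 = (((1/2 : ℝ) * (ρ1 * T0).trace.re : ℝ) : EReal) := by
  classical
  -- Part 1 : T0 is positive semidefinite
  have hT0psd : T0.PosSemidef := by
    refine hT0.posSemidef_iff_eigenvalues_nonneg.mpr fun i => show (0:ℝ) ≤ hT0.eigenvalues i from ?_
    set t : ℝ := hT0.eigenvalues i with ht
    set v : Fin n → ℂ := ⇑(hT0.eigenvectorBasis i) with hvdef
    have hmv : T0 *ᵥ v = ((t : ℝ) : ℂ) • v := by
      have h := hT0.mulVec_eigenvectorBasis i
      rw [hvdef, h]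
      ext j
      simp [Complex.real_smul, ht]
    have hvne : v ≠ 0 := by
      intro h
      have h1 : ‖hT0.eigenvectorBasis i‖ = 1 := hT0.eigenvectorBasis.orthonormal.1 i
      have h0 : hT0.eigenvectorBasis i = 0 := by simpa [hvdef] using congrArg (WithLp.toLp 2) h
      rw [h0, norm_zero] at h1
      exact one_ne_zero h1.symm
    have hQ : 0 < dotProduct (star v) (ρ2 *ᵥ v) := h2.dotProduct_mulVec_pos hvne
    have hlhs : 0 ≤ dotProduct (star v) (ρ1 *ᵥ v) := h1.dotProduct_mulVec_nonneg v
    have hvT : star v ᵥ* T0 = ((t : ℝ) : ℂ) • star v := by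
      have h1' : star (T0 *ᵥ v) = star v ᵥ* T0 := by
        conv_rhs => rw [← hT0.eq]
        rw [Matrix.star_mulVec]
      rw [← h1', hmv, star_smul]
      simp
    have hdot : dotProduct (star v) (ρ1 *ᵥ v)
        = ((t/2 : ℝ) : ℂ) * dotProduct (star v) (ρ2 *ᵥ v) := by
      rw [← hLyap]
      rw [Matrix.smul_mulVec, Matrix.add_mulVec]
      rw [dotProduct_smul, dotProduct_add]
      have hA : dotProduct (star v) ((T0 * ρ2) *ᵥ v)
          = ((t:ℝ):ℂ) * dotProduct (star v) (ρ2 *ᵥ v) := by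
        rw [← Matrix.mulVec_mulVec, dotProduct_mulVec, hvT, smul_dotProduct]
        simp [smul_eq_mul, dotProduct_mulVec]
      have hB : dotProduct (star v) ((ρ2 * T0) *ᵥ v)
          = ((t:ℝ):ℂ) * dotProduct (star v) (ρ2 *ᵥ v) := by
        rw [← Matrix.mulVec_mulVec, hmv, Matrix.mulVec_smul, dotProduct_smul]
        simp [smul_eq_mul]
      rw [hA, hB]
      rw [smul_eq_mul]
      push_cast
      ring
    have hQre : 0 < (dotProduct (star v) (ρ2 *ᵥ v)).re := by
      have := Complex.lt_def.mp hQ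
      simpa using this.1
    have hre : 0 ≤ (t/2) * (dotProduct (star v) (ρ2 *ᵥ v)).re := by
      rw [hdot] at hlhs
      have := (Complex.nonneg_iff.mp hlhs).1
      rwa [Complex.re_ofReal_mul] at this
    nlinarith [hQre, hre]
  -- trace formula for ρ1 * B
  have hρ1tr : ∀ B : Matrix (Fin n) (Fin n) ℂ, (ρ1 * B).trace
      = (1/4 : ℂ) * ((T0 * ρ2 * B).trace + (ρ2 * T0 * B).trace) := by
    intro B
    rw [← hLyap, Matrix.smul_mul, Matrix.trace_smul, Matrix.add_mul, Matrix.trace_add,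
      smul_eq_mul]
  set c : ℝ := (1/4 : ℝ) * (ρ2 * (T0 * T0)).trace.re with hc
  set K : Matrix (Fin n) (Fin n) ℂ := T0 * ρ2 * T0 with hKdef
  have hKpsd : K.PosSemidef := by
    have h := h2.posSemidef.mul_mul_conjTranspose_same T0
    rwa [hT0.eq] at h
  have hKtr : K.trace = (ρ2 * (T0 * T0)).trace := by
    rw [hKdef, Matrix.mul_assoc, Matrix.trace_mul_comm T0 (ρ2 * T0), Matrix.mul_assoc]
  -- Part 2 : upper bound
  have hub : ∀ (m : ℕ) (M : Fin m → Matrix (Fin n) (Fin n) ℂ), IsPOVM M →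
      ∑ x, gfun ftwo ((ρ1 * M x).trace.re) ((ρ2 * M x).trace.re) ≤ ((c : ℝ) : EReal) := by
    intro m M hM
    have hterm : ∀ x, gfun ftwo ((ρ1 * M x).trace.re) ((ρ2 * M x).trace.re)
        ≤ ((((1/4 : ℝ)) * (K * M x).trace.re : ℝ) : EReal) := by
      intro x
      have hMx : (M x).PosSemidef := hM.1 x
      set S := h2.posSemidef.sqrt with hSdef
      set R := hMx.sqrt with hRdef
      have hSh : Sᴴ = S := h2.posSemidef.posSemidef_sqrt.1
      have hRh : Rᴴ = R := hMx.posSemidef_sqrt.1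
      have hSS : S * S = ρ2 := h2.posSemidef.sqrt_mul_self
      have hRR : R * R = M x := hMx.sqrt_mul_self
      set Y := S * T0 * R with hYdef
      set X := S * R with hXdef
      have hYh : Yᴴ = R * T0 * S := by
        rw [hYdef, Matrix.conjTranspose_mul, Matrix.conjTranspose_mul, hSh, hRh, hT0.eq,
          Matrix.mul_assoc]
      have hXh : Xᴴ = R * S := by
        rw [hXdef, Matrix.conjTranspose_mul, hSh, hRh]
      have e1 : (Yᴴ * X).trace = (T0 * ρ2 * (M x)).trace := by
        have h' : Yᴴ * X = R * (T0 * ρ2) * R := by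
          rw [hYh, hXdef, ← hSS]; simp only [Matrix.mul_assoc]
        rw [h', trace_rot, hRR]
      have e2 : (Xᴴ * X).trace = (ρ2 * (M x)).trace := by
        have h' : Xᴴ * X = R * ρ2 * R := by
          rw [hXh, hXdef, ← hSS]; simp only [Matrix.mul_assoc]
        rw [h', trace_rot, hRR]
      have e3 : (Yᴴ * Y).trace = (K * (M x)).trace := by
        have h' : Yᴴ * Y = R * K * R := by
          rw [hYh, hYdef, hKdef, ← hSS]; simp only [Matrix.mul_assoc]
        rw [h', trace_rot, hRR]
      have e4 : (ρ2 * T0 * (M x)).trace = star ((Yᴴ * X).trace) := by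
        have h5 : Xᴴ * Y = R * (ρ2 * T0) * R := by
          rw [hXh, hYdef, ← hSS]; simp only [Matrix.mul_assoc]
        have h6 : (ρ2 * T0 * M x).trace = (Xᴴ * Y).trace := by
          rw [h5, trace_rot, hRR]
        rw [h6, show Xᴴ * Y = (Yᴴ * X)ᴴ from by
            rw [Matrix.conjTranspose_mul Yᴴ X, Matrix.conjTranspose_conjTranspose],
          Matrix.trace_conjTranspose]
      have hp : (ρ1 * M x).trace.re = (1/2 : ℝ) * ((Yᴴ * X).trace).re := by
        rw [hρ1tr, ← e1, e4]
        have h' : ∀ z : ℂ, ((1/4:ℂ) * (z + star z)).re = (1/2 : ℝ) * z.re := by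
          intro z
          simp [Complex.mul_re, Complex.add_re, Complex.add_im]
          ring
        exact h' _
      have hq0 : 0 ≤ (ρ2 * M x).trace.re :=
        (Complex.nonneg_iff.mp (trace_mul_psd_nonneg h2.posSemidef hMx)).1
      have hr0 : 0 ≤ (K * M x).trace.re :=
        (Complex.nonneg_iff.mp (trace_mul_psd_nonneg hKpsd hMx)).1
      have hp0 : 0 ≤ (ρ1 * M x).trace.re :=
        (Complex.nonneg_iff.mp (trace_mul_psd_nonneg h1 hMx)).1
      have hCS := trace_CS Y X
      rw [e3, e2] at hCS
      have hkey : ((ρ1 * M x).trace.re)^2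
          ≤ (1/4 : ℝ) * ((K * M x).trace.re * (ρ2 * M x).trace.re) := by
        rw [hp]; nlinarith [hCS]
      rcases eq_or_lt_of_le hq0 with hq | hq
      · have hpz : (ρ1 * M x).trace.re = 0 := by nlinarith
        rw [hpz, ← hq, gfun_ftwo_zero]
        exact EReal.coe_nonneg.mpr (by positivity)
      · rw [gfun_ftwo_pos hp0 hq]
        apply EReal.coe_le_coe_iff.mpr
        rw [div_le_iff₀ hq]
        nlinarith
    calc ∑ x, gfun ftwo ((ρ1 * M x).trace.re) ((ρ2 * M x).trace.re)
        ≤ ∑ x, ((((1/4 : ℝ)) * (K * M x).trace.re : ℝ) : EReal) :=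
          Finset.sum_le_sum fun x _ => hterm x
      _ = ((∑ x, (1/4 : ℝ) * (K * M x).trace.re : ℝ) : EReal) := ereal_coe_sum _ _
      _ = ((c : ℝ) : EReal) := by
          congr 1
          rw [← Finset.mul_sum, ← Complex.re_sum, ← Matrix.trace_sum, ← Finset.mul_sum, hM.2,
            mul_one, hKtr]
  -- Part 3 : lower bound via the eigenprojections of T0
  set U : Matrix (Fin n) (Fin n) ℂ := (hT0.eigenvectorUnitary : Matrix (Fin n) (Fin n) ℂ)
    with hUdef
  have hUU : Uᴴ * U = 1 := by
    rw [← Matrix.star_eq_conjTranspose]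
    exact (Unitary.mem_iff.mp hT0.eigenvectorUnitary.2).1
  have hUUt : U * Uᴴ = 1 := by
    rw [← Matrix.star_eq_conjTranspose]
    exact (Unitary.mem_iff.mp hT0.eigenvectorUnitary.2).2
  set D : Matrix (Fin n) (Fin n) ℂ :=
    Matrix.diagonal (fun i => ((hT0.eigenvalues i : ℝ) : ℂ)) with hDdef
  have hspec : T0 = U * D * Uᴴ := by
    have h := hT0.spectral_theorem
    rw [Unitary.conjStarAlgAut_apply] at h
    rw [← Matrix.star_eq_conjTranspose]
    exact h
  set E : Fin n → Matrix (Fin n) (Fin n) ℂ := fun i => Matrix.diagonal (Pi.single i 1)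
    with hEdef
  set MM : Fin n → Matrix (Fin n) (Fin n) ℂ := fun i => U * E i * Uᴴ with hMMdef
  have hEpsd : ∀ i, (E i).PosSemidef := by
    intro i
    refine Matrix.PosSemidef.diagonal fun j => ?_
    by_cases h : j = i <;> simp [Pi.single_apply, h]
  have hMMpsd : ∀ i, (MM i).PosSemidef := fun i => (hEpsd i).mul_mul_conjTranspose_same U
  have hEsum : ∑ i, E i = 1 := by
    ext j k
    simp only [hEdef, Matrix.sum_apply, Matrix.diagonal_apply, Pi.single_apply]
    by_cases h : j = k
    · subst h
      simp [Matrix.one_apply]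
    · simp [h, Matrix.one_apply]
  have hMMsum : ∑ i, MM i = 1 := by
    rw [hMMdef]
    calc (∑ i : Fin n, U * E i * Uᴴ) = U * (∑ i, E i) * Uᴴ := by
          rw [Finset.mul_sum, Finset.sum_mul]
      _ = 1 := by rw [hEsum, mul_one, hUUt]
  have hPOVM : IsPOVM MM := ⟨hMMpsd, hMMsum⟩
  have hDE : ∀ i, D * E i = ((hT0.eigenvalues i : ℝ) : ℂ) • E i := by
    intro i
    ext j k
    simp only [hDdef, hEdef, Matrix.diagonal_mul_diagonal, Matrix.diagonal_apply,
      Matrix.smul_apply, Pi.single_apply, smul_eq_mul]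
    by_cases h : j = k
    · subst h
      by_cases h2 : j = i <;> simp [h2]
    · simp [h]
  have hED : ∀ i, E i * D = ((hT0.eigenvalues i : ℝ) : ℂ) • E i := by
    intro i
    ext j k
    simp only [hDdef, hEdef, Matrix.diagonal_mul_diagonal, Matrix.diagonal_apply,
      Matrix.smul_apply, Pi.single_apply, smul_eq_mul]
    by_cases h : j = k
    · subst h
      by_cases h2 : j = i <;> simp [h2]
    · simp [h]
  have hT0MM : ∀ i, T0 * MM i = ((hT0.eigenvalues i : ℝ) : ℂ) • MM i := by
    intro i
    rw [hMMdef]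
    calc T0 * (U * E i * Uᴴ) = U * D * (Uᴴ * U) * E i * Uᴴ := by
          rw [hspec]; simp only [Matrix.mul_assoc]
      _ = U * (D * E i) * Uᴴ := by rw [hUU, Matrix.mul_one]; simp only [Matrix.mul_assoc]
      _ = ((hT0.eigenvalues i : ℝ) : ℂ) • (U * E i * Uᴴ) := by
          rw [hDE i, Matrix.mul_smul, Matrix.smul_mul]
  have hMMT0 : ∀ i, MM i * T0 = ((hT0.eigenvalues i : ℝ) : ℂ) • MM i := by
    intro i
    rw [hMMdef]
    calc U * E i * Uᴴ * T0 = U * E i * (Uᴴ * U) * D * Uᴴ := by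
          rw [hspec]; simp only [Matrix.mul_assoc]
      _ = U * (E i * D) * Uᴴ := by rw [hUU, Matrix.mul_one]; simp only [Matrix.mul_assoc]
      _ = ((hT0.eigenvalues i : ℝ) : ℂ) • (U * E i * Uᴴ) := by
          rw [hED i, Matrix.mul_smul, Matrix.smul_mul]
  have hqpos : ∀ i, 0 < (ρ2 * MM i).trace.re := by
    intro i
    have hMMapp : ∀ j k, MM i j k = U j i * (starRingEnd ℂ) (U k i) := by
      intro j k
      rw [hMMdef]
      simp [Matrix.mul_apply, hEdef, Matrix.diagonal_apply, Pi.single_apply,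
        Matrix.conjTranspose_apply, ite_mul, mul_ite, Finset.sum_ite_eq, Finset.sum_ite_eq']
    have hv : (fun j => U j i) ≠ 0 := by
      intro h
      have hzero : ∀ j, U j i = 0 := fun j => congrFun h j
      have h1' : (Uᴴ * U) i i = 1 := by rw [hUU]; simp [Matrix.one_apply]
      rw [Matrix.mul_apply] at h1'
      simp [Matrix.conjTranspose_apply, hzero] at h1'
    have htr : (ρ2 * MM i).trace
        = dotProduct (star fun j => U j i) (ρ2 *ᵥ fun j => U j i) := by
      simp only [Matrix.trace, Matrix.diag, Matrix.mul_apply, hMMapp, dotProduct,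
        Matrix.mulVec, Pi.star_apply, RCLike.star_def]
      refine Finset.sum_congr rfl fun j _ => ?_
      simp only [Finset.mul_sum]
      refine Finset.sum_congr rfl fun k _ => by ring
    have hQ := h2.dotProduct_mulVec_pos hv
    rw [← htr] at hQ
    have := Complex.lt_def.mp hQ
    simpa using this.1
  have hpval : ∀ i, (ρ1 * MM i).trace.re
      = (hT0.eigenvalues i / 2) * (ρ2 * MM i).trace.re := by
    intro i
    rw [hρ1tr (MM i)]
    have hA : (T0 * ρ2 * MM i).trace
        = ((hT0.eigenvalues i : ℝ) : ℂ) * (ρ2 * MM i).trace := by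
      rw [Matrix.trace_mul_comm (T0 * ρ2) (MM i), ← Matrix.mul_assoc, hMMT0 i,
        Matrix.smul_mul, Matrix.trace_smul, smul_eq_mul, Matrix.trace_mul_comm]
    have hB : (ρ2 * T0 * MM i).trace
        = ((hT0.eigenvalues i : ℝ) : ℂ) * (ρ2 * MM i).trace := by
      rw [Matrix.mul_assoc, hT0MM i, Matrix.mul_smul, Matrix.trace_smul, smul_eq_mul]
    rw [hA, hB]
    have h' : (1/4:ℂ) * (((hT0.eigenvalues i : ℝ) : ℂ) * (ρ2 * MM i).trace
          + ((hT0.eigenvalues i : ℝ) : ℂ) * (ρ2 * MM i).trace)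
        = (((hT0.eigenvalues i / 2 : ℝ)) : ℂ) * (ρ2 * MM i).trace := by
      push_cast
      ring
    rw [h', Complex.re_ofReal_mul]
  have hterm2 : ∀ i, gfun ftwo ((ρ1 * MM i).trace.re) ((ρ2 * MM i).trace.re)
      = ((((1/4 : ℝ)) * (hT0.eigenvalues i ^ 2 * (ρ2 * MM i).trace.re) : ℝ) : EReal) := by
    intro i
    have ht0 : (0:ℝ) ≤ hT0.eigenvalues i := hT0psd.eigenvalues_nonneg i
    have hq := hqpos i
    rw [hpval i, gfun_ftwo_pos (mul_nonneg (by linarith) hq.le) hq]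
    congr 1
    field_simp
    ring
  have hsum : ∑ i, gfun ftwo ((ρ1 * MM i).trace.re) ((ρ2 * MM i).trace.re)
      = ((c : ℝ) : EReal) := by
    rw [Finset.sum_congr rfl (fun i _ => hterm2 i), ereal_coe_sum]
    congr 1
    have hTMT : ∀ i, T0 * MM i * T0 = ((hT0.eigenvalues i ^ 2 : ℝ) : ℂ) • MM i := by
      intro i
      rw [Matrix.mul_assoc, hMMT0 i, Matrix.mul_smul, hT0MM i, smul_smul]
      congr 1
      push_cast
      ring
    have h1' : ∀ i, hT0.eigenvalues i ^ 2 * (ρ2 * MM i).trace.re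
        = (ρ2 * (T0 * MM i * T0)).trace.re := by
      intro i
      rw [hTMT i, Matrix.mul_smul, Matrix.trace_smul, smul_eq_mul, Complex.re_ofReal_mul]
    calc (∑ i, (1/4 : ℝ) * (hT0.eigenvalues i ^ 2 * (ρ2 * MM i).trace.re))
        = (1/4 : ℝ) * ∑ i, (ρ2 * (T0 * MM i * T0)).trace.re := by
          rw [← Finset.mul_sum]
          congr 1
          exact Finset.sum_congr rfl fun i _ => h1' i
      _ = (1/4 : ℝ) * ((ρ2 * (T0 * T0)).trace.re) := by
          rw [← Complex.re_sum, ← Matrix.trace_sum, ← Finset.mul_sum]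
          have hS : (∑ i, T0 * MM i * T0) = T0 * T0 := by
            rw [show (∑ i, T0 * MM i * T0) = T0 * (∑ i, MM i) * T0 from by
              rw [Finset.mul_sum, Finset.sum_mul], hMMsum, mul_one]
          rw [hS]
      _ = c := rfl
  have hDlow : ((c : ℝ) : EReal) ≤ Dfmin ftwo ρ1 ρ2 := by
    rw [← hsum]
    unfold Dfmin
    refine le_iSup_of_le n ?_
    refine le_iSup_of_le MM ?_
    exact le_iSup_of_le hPOVM le_rfl
  have hDup : Dfmin ftwo ρ1 ρ2 ≤ ((c : ℝ) : EReal) := by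
    unfold Dfmin
    exact iSup_le fun m => iSup_le fun M => iSup_le fun hM => hub m M hM
  have hmain : Dfmin ftwo ρ1 ρ2 = ((c : ℝ) : EReal) := le_antisymm hDup hDlow
  refine ⟨hT0psd, hmain, ?_⟩
  rw [hmain]
  congr 1
  have h5 : (ρ1 * T0).trace = (1/2:ℂ) * (ρ2 * (T0 * T0)).trace := by
    rw [hρ1tr T0]
    have e1 : (T0 * ρ2 * T0).trace = (ρ2 * (T0 * T0)).trace := by
      rw [Matrix.mul_assoc, Matrix.trace_mul_comm T0 (ρ2 * T0), Matrix.mul_assoc]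
    have e2 : (ρ2 * T0 * T0).trace = (ρ2 * (T0 * T0)).trace := by rw [Matrix.mul_assoc]
    rw [e1, e2]
    ring
  rw [hc, h5]
  rw [show (1/2:ℂ) = ((1/2:ℝ):ℂ) by norm_num, Complex.re_ofReal_mul]
  ring
end
end

section
/- Let f be a proper lower semicontinuous convex function with dom f ⊇ (0,∞), and define f₀* : ℝ → ℝ ∪ {+∞} by f₀*(t) := f*(t) if f*(t') > f*(t) for every t' > t, and f₀*(t) := +∞ otherwise; let f₀ := (f₀*)* be its convex conjugate, and let f'₊(0) denote the right derivative of f at 0 (possibly −∞). Then: (i) f₀(λ) = f(λ) for all λ ≥ 0; (ii) if f'₊(0) is finite, then f₀(λ) = f'₊(0)·λ + f(0) for all λ < 0, and inf dom f₀* = f'₊(0); (iii) if f'₊(0) = −∞, then f₀(λ) = +∞ for all λ < 0. -/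
open Filter Matrix
open scoped ComplexOrder
open scoped BigOperators

noncomputable section

attribute [local instance] Classical.propDecidable

/-- The conjugate of the canonicalization: `f₀*(t) = f*(t)` if `f*` is strictly
increasing to the right of `t`, and `+∞` otherwise. -/
def fzeroStar (f : ℝ → EReal) (t : ℝ) : EReal :=
  if ∀ t' : ℝ, t < t' → econj f t < econj f t' then econj f t else ⊤

/-- The canonicalization `f₀ = (f₀*)*`. -/
def fzero (f : ℝ → EReal) : ℝ → EReal := econj (fzeroStar f)

namespace Stmt18Aux

lemma coe_sub_le_coe {a c : ℝ} {b : EReal} (h : ((a - c : ℝ) : EReal) ≤ b) :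
    (a : EReal) - b ≤ (c : EReal) := by
  induction b with
  | bot => exact absurd (le_bot_iff.1 h) (EReal.coe_ne_bot _)
  | coe b =>
      have : a - c ≤ b := by exact_mod_cast h
      have : (a - b : ℝ) ≤ c := by linarith
      exact_mod_cast this
  | top => simp [EReal.sub_top]

lemma le_coe_sub {a c : ℝ} {b : EReal} (h : b ≤ ((a - c : ℝ) : EReal)) :
    (c : EReal) ≤ (a : EReal) - b := by
  induction b with
  | bot => simp
  | coe b =>
      have : b ≤ a - c := by exact_mod_cast h
      have : c ≤ (a - b : ℝ) := by linarith
      exact_mod_cast this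
  | top => exact absurd (top_le_iff.1 h) (EReal.coe_ne_top _)

lemma forall_lt_imp_eq_top {x : EReal} (h : ∀ c : ℝ, (c : EReal) < x) : x = ⊤ := by
  by_contra hx
  induction x with
  | bot => exact absurd (h 0) (by simp)
  | coe x => exact absurd (h x) (by simp)
  | top => exact hx rfl

lemma le_of_forall_lt_coe {x y : EReal} (h : ∀ c : ℝ, (c : EReal) < x → (c : EReal) ≤ y) :
    x ≤ y := by
  by_contra hxy
  push_neg at hxy
  obtain ⟨c, hc1, hc2⟩ := EReal.exists_between_coe_real hxy
  exact absurd (h c hc2) (not_le.2 hc1)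

variable {f : ℝ → EReal} {l t : ℝ} (hf : NiceF f)
include hf

/-- the real value of f -/
def FR (f : ℝ → EReal) (l : ℝ) : ℝ := (f l).toReal

lemma f_real (hl : (0:ℝ) < l) : f l = ((FR f l : ℝ) : EReal) :=
  (EReal.coe_toReal (ne_of_lt (hf.dom hl)) (hf.ne_bot l)).symm

lemma f_real' (hl : f l ≠ ⊤) : f l = ((FR f l : ℝ) : EReal) :=
  (EReal.coe_toReal hl (hf.ne_bot l)).symm

omit hf in
lemma le_econj (t l : ℝ) : ((t * l : ℝ) : EReal) - f l ≤ econj f t :=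
  le_iSup (fun l : ℝ => ((t * l : ℝ) : EReal) - f l) l

lemma term_le (t l : ℝ) : ((t * l : ℝ) : EReal) - econj f t ≤ f l := by
  rcases eq_or_ne (f l) ⊤ with h | h
  · exact h ▸ le_top
  · rw [f_real' hf h]
    refine coe_sub_le_coe ?_
    have := le_econj (f := f) t l
    rwa [f_real' hf h, ← EReal.coe_sub] at this

lemma econj_lb (t : ℝ) : ((t - FR f 1 : ℝ) : EReal) ≤ econj f t := by
  have := le_econj (f := f) t 1
  rwa [f_real hf one_pos, ← EReal.coe_sub, mul_one] at this

lemma econj_ne_bot (t : ℝ) : econj f t ≠ ⊥ :=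
  by
  intro h
  have := econj_lb hf t
  rw [h, le_bot_iff] at this
  exact EReal.coe_ne_bot _ this

lemma econj_lsc : LowerSemicontinuous (econj f) := by
  apply lowerSemicontinuous_iSup
  intro l
  rcases eq_or_ne (f l) ⊤ with h | h
  · have : (fun t : ℝ => ((t * l : ℝ) : EReal) - f l) = fun _ => (⊥ : EReal) := by
      funext t; rw [h, EReal.sub_top]
    rw [this]; exact lowerSemicontinuous_const
  · have : (fun t : ℝ => ((t * l : ℝ) : EReal) - f l)
        = fun t : ℝ => ((t * l - FR f l : ℝ) : EReal) := by
      funext t; rw [f_real' hf h, ← EReal.coe_sub]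
    rw [this]
    exact (continuous_coe_real_ereal.comp (by fun_prop)).lowerSemicontinuous

lemma econj_real {t : ℝ} (h : econj f t ≠ ⊤) :
    econj f t = (((econj f t).toReal : ℝ) : EReal) :=
  (EReal.coe_toReal h (econj_ne_bot hf t)).symm

/-- push a point of small conjugate value into the strictly increasing set -/
lemma exists_S_ge (t : ℝ) (hgt : econj f t ≠ ⊤) :
    ∃ u, t ≤ u ∧ econj f u ≤ econj f t ∧ ∀ t', u < t' → econj f u < econj f t' := by
  set M : Set ℝ := {s | t ≤ s ∧ econj f s ≤ econj f t} with hM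
  have hne : t ∈ M := ⟨le_refl t, le_refl _⟩
  have hbdd : BddAbove M := by
    refine ⟨(econj f t).toReal + FR f 1, fun s hs => ?_⟩
    have h1 : ((s - FR f 1 : ℝ) : EReal) ≤ econj f t := (econj_lb hf s).trans hs.2
    have h2 : s - FR f 1 ≤ (econj f t).toReal := by
      rw [econj_real hf hgt] at h1; exact_mod_cast h1
    linarith
  set u := sSup M with hu
  have htu : t ≤ u := le_csSup hbdd hne
  have hgu : econj f u ≤ econj f t := by
    by_contra hlt
    push_neg at hlt
    have hcl : u ∈ closure M := ((isLUB_csSup ⟨t, hne⟩ hbdd).mem_closure ⟨t, hne⟩)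
    have hev : {x : ℝ | econj f t < econj f x} ∈ nhds u := econj_lsc hf u (econj f t) hlt
    obtain ⟨s, hs1, hs2⟩ := mem_closure_iff_nhds.1 hcl _ hev
    exact absurd hs2.2 (not_le.2 hs1)
  refine ⟨u, htu, hgu, fun t' ht' => ?_⟩
  have ht'M : t' ∉ M := fun h => absurd (le_csSup hbdd h) (not_le.2 ht')
  have : ¬ econj f t' ≤ econj f t := fun h => ht'M ⟨htu.trans ht'.le, h⟩
  exact lt_of_le_of_lt hgu (not_le.1 this)

end Stmt18Aux

namespace Stmt18Aux
variable {f : ℝ → EReal} {l t : ℝ} (hf : NiceF f)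
include hf

lemma convR {x y : ℝ} (a b : ℝ) (hx : f x ≠ ⊤) (hy : f y ≠ ⊤) (ha : 0 ≤ a) (hb : 0 ≤ b)
    (hab : a + b = 1) :
    f (a * x + b * y) ≤ ((a * FR f x + b * FR f y : ℝ) : EReal) := by
  have h := hf.convex x y a b ha hb hab
  rwa [f_real' hf hx, f_real' hf hy, ← EReal.coe_mul, ← EReal.coe_mul, ← EReal.coe_add] at h

lemma convRR {x y : ℝ} (a b : ℝ) (hx : f x ≠ ⊤) (hy : f y ≠ ⊤) (ha : 0 ≤ a) (hb : 0 ≤ b)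
    (hab : a + b = 1) :
    FR f (a * x + b * y) ≤ a * FR f x + b * FR f y := by
  have h := convR hf a b hx hy ha hb hab
  have := EReal.toReal_le_toReal h (hf.ne_bot _) (EReal.coe_ne_top _)
  rwa [EReal.toReal_coe] at this

def epi (f : ℝ → EReal) : Set (ℝ × ℝ) := {p | f p.1 ≤ (p.2 : EReal)}

lemma epi_convex : Convex ℝ (epi f) := by
  intro p hp q hq a b ha hb hab
  have hp1 : f p.1 ≠ ⊤ := ne_top_of_le_ne_top (EReal.coe_ne_top _) hp
  have hq1 : f q.1 ≠ ⊤ := ne_top_of_le_ne_top (EReal.coe_ne_top _) hq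
  have hpr : FR f p.1 ≤ p.2 := by
    have := hp; simp only [epi, Set.mem_setOf_eq] at this
    rw [f_real' hf hp1] at this; exact_mod_cast this
  have hqr : FR f q.1 ≤ q.2 := by
    have := hq; simp only [epi, Set.mem_setOf_eq] at this
    rw [f_real' hf hq1] at this; exact_mod_cast this
  have hmem : (a • p + b • q).1 = a * p.1 + b * q.1 := rfl
  show f (a • p + b • q).1 ≤ (((a • p + b • q).2 : ℝ) : EReal)
  rw [hmem]
  refine (convR hf a b hp1 hq1 ha hb hab).trans ?_
  have : (a • p + b • q).2 = a * p.2 + b * q.2 := rfl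
  rw [this, EReal.coe_le_coe_iff]
  have := mul_le_mul_of_nonneg_left hpr ha
  have := mul_le_mul_of_nonneg_left hqr hb
  linarith

omit hf in
lemma epi_closed (hlsc : LowerSemicontinuous f) : IsClosed (epi f) := by
  rw [← isOpen_compl_iff, isOpen_iff_mem_nhds]
  rintro ⟨x, y⟩ hp
  have hxy : ((y : ℝ) : EReal) < f x := not_le.1 hp
  obtain ⟨q, hq1, hq2⟩ := EReal.exists_between_coe_real hxy
  have h1 : {x' : ℝ | ((q : ℝ) : EReal) < f x'} ∈ nhds x := hlsc x _ hq2
  have h2 : Set.Iio q ∈ nhds y := Iio_mem_nhds (by exact_mod_cast hq1)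
  refine Filter.mem_of_superset (prod_mem_nhds h1 h2) ?_
  rintro ⟨x', y'⟩ ⟨hx', hy'⟩
  simp only [Set.mem_compl_iff, epi, Set.mem_setOf_eq, not_le]
  exact lt_trans (by exact_mod_cast (lt_of_lt_of_le (show (y' : ℝ) < q from hy') le_rfl)) hx'

lemma sep (l c : ℝ) (hl : 0 ≤ l) (hc : (c : EReal) < f l) :
    ∃ t : ℝ, econj f t ≤ ((t * l - c : ℝ) : EReal) := by
  have hmem : (l, c) ∉ epi f := by
    simp only [epi, Set.mem_setOf_eq, not_le]; exact hc
  obtain ⟨ψ, u, hsep, hpt⟩ :=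
    geometric_hahn_banach_closed_point (epi_convex hf) (epi_closed hf.lsc) hmem
  set a : ℝ := ψ (1, 0) with ha
  set b : ℝ := ψ (0, 1) with hb
  have hψ : ∀ x y : ℝ, ψ (x, y) = a * x + b * y := by
    intro x y
    have hdec : (x, y) = x • ((1:ℝ), (0:ℝ)) + y • ((0:ℝ), (1:ℝ)) := by
      simp [Prod.ext_iff]
    rw [hdec, map_add, _root_.map_smul, _root_.map_smul, smul_eq_mul, smul_eq_mul, ← ha, ← hb]
    ring
  have hepi : ∀ x : ℝ, f x ≠ ⊤ → a * x + b * FR f x < u := by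
    intro x hx
    have hm : (x, FR f x) ∈ epi f := by
      simp only [epi, Set.mem_setOf_eq]
      rw [f_real' hf hx]
    have := hsep _ hm
    rwa [hψ] at this
  have hf1 : f 1 ≠ ⊤ := ne_of_lt (hf.dom (Set.mem_Ioi.2 one_pos))
  have hbneg : b < 0 := by
    rcases lt_trichotomy b 0 with h | h | h
    · exact h
    · exfalso
      have key : ∀ x : ℝ, 0 < x → a * x < u := by
        intro x hx
        have := hepi x (ne_of_lt (hf.dom (Set.mem_Ioi.2 hx)))
        rw [h] at this; linarith
      have hu0 : 0 ≤ u := by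
        by_contra hu; push_neg at hu
        rcases lt_or_ge a 0 with h' | h'
        · have hx : 0 < u / (2*a) := div_pos_of_neg_of_neg hu (by linarith)
          have hk := key _ hx
          have he : a * (u / (2 * a)) = u / 2 := by
            have : a ≠ 0 := ne_of_lt h'
            field_simp
          rw [he] at hk; linarith
        · have hk := key 1 one_pos
          rw [mul_one] at hk; linarith
      have ha0 : a ≤ 0 := by
        by_contra h'
        push_neg at h'
        have hk := key ((u + 1) / a) (by positivity)
        rw [mul_comm, div_mul_cancel₀ _ (ne_of_gt h')] at hk
        linarith
      have hlc : ψ (l, c) = a * l := by rw [hψ, h]; ring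
      rw [hlc] at hpt
      nlinarith [mul_nonpos_of_nonpos_of_nonneg ha0 hl]
    · exfalso
      set y : ℝ := max (FR f 1) ((u - a) / b) with hy
      have hmem2 : ((1 : ℝ), y) ∈ epi f := by
        simp only [epi, Set.mem_setOf_eq]
        rw [f_real' hf hf1]
        exact_mod_cast le_max_left _ _
      have hs := hsep _ hmem2
      rw [hψ] at hs
      have hby : u - a ≤ b * y := by
        have hyy : (u - a) / b ≤ y := le_max_right _ _
        calc u - a = b * ((u - a)/b) := by rw [mul_div_cancel₀]; exact ne_of_gt h
        _ ≤ b * y := mul_le_mul_of_nonneg_left hyy (le_of_lt h)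
      linarith
  have hβpos : 0 < -b := by linarith
  have hdiv : ∀ p q : ℝ, p ≤ q → p / (-b) ≤ q / (-b) := by
    intro p q h
    rw [div_le_div_iff₀ hβpos hβpos]
    nlinarith
  refine ⟨a / (-b), ?_⟩
  have hkey : ∀ x : ℝ, ((a / (-b) * x : ℝ) : EReal) - f x ≤ ((u / (-b) : ℝ) : EReal) := by
    intro x
    rcases eq_or_ne (f x) ⊤ with hx | hx
    · rw [hx, EReal.sub_top]; exact bot_le
    · rw [f_real' hf hx, ← EReal.coe_sub, EReal.coe_le_coe_iff]
      have h1 := hepi x hx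
      have e : a / (-b) * x - FR f x = (a * x + b * FR f x) / (-b) := by
        field_simp [ne_of_lt hbneg]; ring
      rw [e]
      exact hdiv _ _ h1.le
  have hfinal : u / (-b) ≤ a / (-b) * l - c := by
    have h3 : u < a * l + b * c := by have := hpt; rwa [hψ] at this
    have e : a / (-b) * l - c = (a * l + b * c) / (-b) := by
      field_simp [ne_of_lt hbneg]; ring
    rw [e]
    exact hdiv _ _ h3.le
  exact le_trans (iSup_le hkey) (by exact_mod_cast hfinal)

end Stmt18Aux

namespace Stmt18Aux
variable {f : ℝ → EReal} (hf : NiceF f)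
include hf

lemma part_i (l : ℝ) (hl : 0 ≤ l) : fzero f l = f l := by
  refine le_antisymm ?_ (le_of_forall_lt_coe fun c hc => ?_)
  · simp only [fzero, econj]
    refine iSup_le fun t => ?_
    by_cases h : ∀ t', t < t' → econj f t < econj f t'
    · rw [fzeroStar, if_pos h, mul_comm]
      exact term_le hf t l
    · rw [fzeroStar, if_neg h, EReal.sub_top]
      exact bot_le
  · obtain ⟨t, ht⟩ := sep hf l c hl hc
    have hgt : econj f t ≠ ⊤ := ne_top_of_le_ne_top (EReal.coe_ne_top _) ht
    obtain ⟨u, htu, hgu, hcond⟩ := exists_S_ge hf t hgt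
    have h1 : (c : EReal) ≤ ((t * l : ℝ) : EReal) - econj f t := le_coe_sub ht
    have h2 : ((t * l : ℝ) : EReal) - econj f t ≤ ((u * l : ℝ) : EReal) - econj f u := by
      refine EReal.sub_le_sub ?_ hgu
      exact_mod_cast mul_le_mul_of_nonneg_right htu hl
    have h4 : ((l * u : ℝ) : EReal) - fzeroStar f u ≤ fzero f l :=
      le_iSup (fun s : ℝ => ((l * s : ℝ) : EReal) - fzeroStar f s) u
    rw [mul_comm l u, fzeroStar, if_pos hcond] at h4
    exact (h1.trans h2).trans h4

end Stmt18Aux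

namespace Stmt18Aux
open Filter Set
variable {f : ℝ → EReal} (hf : NiceF f)
include hf

/-- slope of f from 0 -/
def sl (f : ℝ → EReal) (l : ℝ) : ℝ := (FR f l - FR f 0) / l

lemma hyp_coe (h0 : f 0 ≠ ⊤) {l : ℝ} (hl : 0 < l) :
    ((l⁻¹ : ℝ) : EReal) * (f l - f 0) = ((sl f l : ℝ) : EReal) := by
  rw [f_real hf hl, f_real' hf h0, ← EReal.coe_sub, ← EReal.coe_mul, sl, EReal.coe_eq_coe_iff]
  rw [div_eq_inv_mul]

omit hf in
lemma f0_ne_top_of_tendsto {a : EReal} (ha : a ≠ ⊥)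
    (hr : Tendsto (fun l : ℝ => ((l⁻¹ : ℝ) : EReal) * (f l - f 0))
      (nhdsWithin 0 (Set.Ioi 0)) (nhds a)) : f 0 ≠ ⊤ := by
  intro h0
  have hbot : ∀ l ∈ Set.Ioi (0:ℝ), ((l⁻¹ : ℝ) : EReal) * (f l - f 0) = (⊥ : EReal) := by
    intro l hl
    rw [h0, EReal.sub_top, EReal.coe_mul_bot_of_pos (by exact inv_pos.2 hl)]
  have hev : ∀ᶠ l in nhdsWithin (0:ℝ) (Set.Ioi 0),
      ((l⁻¹ : ℝ) : EReal) * (f l - f 0) = (⊥ : EReal) :=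
    eventually_nhdsWithin_of_forall hbot
  have hgt := hr.eventually_const_lt (bot_lt_iff_ne_bot.2 ha)
  obtain ⟨l, h1, h2⟩ := (hev.and hgt).exists
  rw [h1] at h2
  exact absurd h2 (by simp)

lemma tendsto_sl {a : EReal} (h0 : f 0 ≠ ⊤)
    (hr : Tendsto (fun l : ℝ => ((l⁻¹ : ℝ) : EReal) * (f l - f 0))
      (nhdsWithin 0 (Set.Ioi 0)) (nhds a)) :
    Tendsto (fun l => ((sl f l : ℝ) : EReal)) (nhdsWithin 0 (Set.Ioi 0)) (nhds a) := by
  refine hr.congr' ?_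
  filter_upwards [self_mem_nhdsWithin] with l hl
  exact hyp_coe hf h0 hl

lemma sl_mono (h0 : f 0 ≠ ⊤) {l m : ℝ} (hl : 0 < l) (hlm : l ≤ m) : sl f l ≤ sl f m := by
  have hm : 0 < m := lt_of_lt_of_le hl hlm
  have hmtop : f m ≠ ⊤ := ne_of_lt (hf.dom (Set.mem_Ioi.2 hm))
  have h := convRR hf (l/m) (1 - l/m) hmtop h0 (by positivity)
    (by rw [sub_nonneg]; exact div_le_one_of_le₀ hlm hm.le) (by ring)
  rw [show l/m * m + (1 - l/m) * 0 = l by field_simp; ring] at h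
  rw [sl, sl, div_le_div_iff₀ hl hm]
  have h2 : m * FR f l ≤ l * FR f m + (m - l) * FR f 0 := by
    have := mul_le_mul_of_nonneg_left h hm.le
    rw [mul_add] at this
    rw [show m * (l / m * FR f m) = l * FR f m by field_simp] at this
    rw [show m * ((1 - l / m) * FR f 0) = (m - l) * FR f 0 by field_simp] at this
    linarith
  nlinarith

lemma r_le_sl {r : ℝ} (h0 : f 0 ≠ ⊤)
    (hsl : Tendsto (fun l => ((sl f l : ℝ) : EReal)) (nhdsWithin 0 (Set.Ioi 0)) (nhds (r : EReal)))
    {l : ℝ} (hl : 0 < l) : r ≤ sl f l := by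
  by_contra hlt
  push_neg at hlt
  have h1 := hsl.eventually_const_lt (by exact_mod_cast hlt : ((sl f l : ℝ) : EReal) < (r : EReal))
  have h2 : ∀ᶠ m in nhdsWithin (0:ℝ) (Set.Ioi 0), m < l :=
    Filter.Eventually.filter_mono nhdsWithin_le_nhds (Iio_mem_nhds hl)
  obtain ⟨m, hm⟩ := ((h1.and h2).and self_mem_nhdsWithin).exists
  have : sl f l < sl f m := by exact_mod_cast hm.1.1
  exact absurd (sl_mono hf h0 hm.2 hm.1.2.le) (not_le.2 this)

omit hf in
lemma exists_sl_lt {t : ℝ} {a : EReal} (ha : a < (t : EReal))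
    (hsl : Tendsto (fun l => ((sl f l : ℝ) : EReal)) (nhdsWithin 0 (Set.Ioi 0)) (nhds a)) :
    ∃ m : ℝ, 0 < m ∧ sl f m < t := by
  obtain ⟨m, hm1, hm2⟩ := ((hsl.eventually_lt_const ha).and self_mem_nhdsWithin).exists
  exact ⟨m, hm2, by exact_mod_cast hm1⟩

lemma neg_slope_bound (h0 : f 0 ≠ ⊤) {l m : ℝ} (hl : l < 0) (hm : 0 < m) (hflt : f l ≠ ⊤) :
    FR f 0 + sl f m * l ≤ FR f l := by
  have hml : (0:ℝ) < m - l := by linarith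
  have hmtop : f m ≠ ⊤ := ne_of_lt (hf.dom (Set.mem_Ioi.2 hm))
  have h := convRR hf (m/(m-l)) (-l/(m-l)) hflt hmtop (by positivity)
    (div_nonneg (by linarith) hml.le) (by field_simp; ring)
  rw [show m/(m-l) * l + (-l/(m-l)) * m = 0 by field_simp; ring] at h
  have h' : FR f 0 * (m - l) ≤ m * FR f l + (-l) * FR f m := by
    have := mul_le_mul_of_nonneg_left h hml.le
    rw [mul_add] at this
    rw [show (m - l) * (m / (m - l) * FR f l) = m * FR f l by field_simp] at this
    rw [show (m - l) * (-l / (m - l) * FR f m) = (-l) * FR f m by field_simp] at this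
    linarith
  rw [sl, div_mul_eq_mul_div, ← le_sub_iff_add_le', div_le_iff₀ hm]
  nlinarith

end Stmt18Aux

namespace Stmt18Aux
open Filter Set
variable {f : ℝ → EReal} (hf : NiceF f)
include hf

lemma gbot (h0 : f 0 ≠ ⊤) (t : ℝ) : ((-FR f 0 : ℝ) : EReal) ≤ econj f t := by
  have h := le_econj (f := f) t 0
  rwa [mul_zero, f_real' hf h0, ← EReal.coe_sub, zero_sub] at h

lemma neg_lb {r : ℝ} (h0 : f 0 ≠ ⊤)
    (hsl : Tendsto (fun l => ((sl f l : ℝ) : EReal)) (nhdsWithin 0 (Set.Ioi 0)) (nhds (r : EReal)))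
    {l : ℝ} (hl : l < 0) (hflt : f l ≠ ⊤) : FR f 0 + r * l ≤ FR f l := by
  by_contra hc
  push_neg at hc
  have ht : r < (FR f l - FR f 0) / l := by
    rw [lt_div_iff_of_neg hl]
    linarith
  obtain ⟨m, hm, hslm⟩ := exists_sl_lt (by exact_mod_cast ht) hsl
  have hb := neg_slope_bound hf h0 hl hm hflt
  have : (FR f l - FR f 0) / l ≤ sl f m := by
    rw [div_le_iff_of_neg hl]
    linarith
  linarith

lemma g_at_r {r : ℝ} (h0 : f 0 ≠ ⊤)
    (hsl : Tendsto (fun l => ((sl f l : ℝ) : EReal)) (nhdsWithin 0 (Set.Ioi 0)) (nhds (r : EReal))) :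
    econj f r = ((-FR f 0 : ℝ) : EReal) := by
  refine le_antisymm (iSup_le fun l => ?_) (gbot hf h0 r)
  rcases lt_trichotomy l 0 with hl | hl | hl
  · rcases eq_or_ne (f l) ⊤ with hfl | hfl
    · rw [hfl, EReal.sub_top]; exact bot_le
    · rw [f_real' hf hfl, ← EReal.coe_sub, EReal.coe_le_coe_iff]
      have := neg_lb hf h0 hsl hl hfl
      linarith
  · subst hl
    rw [mul_zero, f_real' hf h0, ← EReal.coe_sub, zero_sub]
  · rw [f_real hf hl, ← EReal.coe_sub, EReal.coe_le_coe_iff]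
    have := r_le_sl hf h0 hsl hl
    rw [sl, le_div_iff₀ hl] at this
    linarith

lemma cond_at_r {r : ℝ} (h0 : f 0 ≠ ⊤)
    (hsl : Tendsto (fun l => ((sl f l : ℝ) : EReal)) (nhdsWithin 0 (Set.Ioi 0)) (nhds (r : EReal))) :
    ∀ t', r < t' → econj f r < econj f t' := by
  intro t' ht'
  rw [g_at_r hf h0 hsl]
  rcases eq_or_ne (econj f t') ⊤ with htop | htop
  · rw [htop]; exact EReal.coe_lt_top _
  · obtain ⟨m, hm, hslm⟩ := exists_sl_lt (by exact_mod_cast ht' : (r : EReal) < (t' : EReal)) hsl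
    have h1 := le_econj (f := f) t' m
    rw [f_real hf hm, ← EReal.coe_sub] at h1
    refine lt_of_lt_of_le ?_ h1
    rw [EReal.coe_lt_coe_iff]
    rw [sl, div_lt_iff₀ hm] at hslm
    linarith

lemma r_lb {r : ℝ} (h0 : f 0 ≠ ⊤)
    (hsl : Tendsto (fun l => ((sl f l : ℝ) : EReal)) (nhdsWithin 0 (Set.Ioi 0)) (nhds (r : EReal)))
    (t : ℝ) (hcond : ∀ t', t < t' → econj f t < econj f t') : r ≤ t := by
  by_contra hc
  push_neg at hc
  have h1 := hcond r hc
  rw [g_at_r hf h0 hsl] at h1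
  exact absurd (gbot hf h0 t) (not_le.2 h1)

lemma part_ii (r : ℝ)
    (hr : Tendsto (fun l : ℝ => ((l⁻¹ : ℝ) : EReal) * (f l - f 0))
      (nhdsWithin 0 (Set.Ioi 0)) (nhds (r : EReal))) :
    (∀ l : ℝ, l < 0 → fzero f l = ((r * l : ℝ) : EReal) + f 0) ∧
      IsGLB (edom (fzeroStar f)) r := by
  have h0 : f 0 ≠ ⊤ := f0_ne_top_of_tendsto (by simp) hr
  have hsl := tendsto_sl hf h0 hr
  have hstar_r : fzeroStar f r = ((-FR f 0 : ℝ) : EReal) := by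
    rw [fzeroStar, if_pos (cond_at_r hf h0 hsl), g_at_r hf h0 hsl]
  constructor
  · intro l hl
    rw [f_real' hf h0, ← EReal.coe_add]
    refine le_antisymm (iSup_le fun t => ?_) ?_
    · by_cases hcond : ∀ t', t < t' → econj f t < econj f t'
      · rw [fzeroStar, if_pos hcond]
        have htr : r ≤ t := r_lb hf h0 hsl t hcond
        refine le_trans (EReal.sub_le_sub le_rfl (gbot hf h0 t)) ?_
        rw [← EReal.coe_sub, sub_neg_eq_add, EReal.coe_le_coe_iff]
        nlinarith
      · rw [fzeroStar, if_neg hcond, EReal.sub_top]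
        exact bot_le
    · have h4 : ((l * r : ℝ) : EReal) - fzeroStar f r ≤ fzero f l :=
        le_iSup (fun s : ℝ => ((l * s : ℝ) : EReal) - fzeroStar f s) r
      rw [hstar_r, ← EReal.coe_sub, sub_neg_eq_add] at h4
      refine le_trans (le_of_eq ?_) h4
      rw [EReal.coe_eq_coe_iff]
      ring
  · constructor
    · intro t ht
      have ht' : fzeroStar f t < ⊤ := ht
      by_cases hcond : ∀ t', t < t' → econj f t < econj f t'
      · exact r_lb hf h0 hsl t hcond
      · rw [fzeroStar, if_neg hcond] at ht'
        exact absurd ht' (lt_irrefl _)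
    · intro b hb
      refine hb ?_
      show fzeroStar f r < ⊤
      rw [hstar_r]
      exact EReal.coe_lt_top _

end Stmt18Aux

namespace Stmt18Aux
open Filter Set
variable {f : ℝ → EReal} (hf : NiceF f)
include hf

lemma phi_small (t c : ℝ) (hc : -(f 0) < (c : EReal)) :
    ∃ ε : ℝ, 0 < ε ∧ ∀ l : ℝ, 0 < l → l ≤ ε → ((t * l : ℝ) : EReal) - f l ≤ (c : EReal) := by
  obtain ⟨c', h1, h2⟩ := EReal.exists_between_coe_real hc
  have hc'R : c' < c := by exact_mod_cast h2
  have hc'0 : ((-c' : ℝ) : EReal) < f 0 := by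
    rw [EReal.coe_neg]
    exact EReal.neg_lt_comm.1 h1
  obtain ⟨δ, hδ, hball⟩ := Metric.eventually_nhds_iff.1 (hf.lsc 0 _ hc'0)
  have hA : (0:ℝ) < |t| + 1 := by positivity
  refine ⟨min (δ/2) ((c - c')/(|t|+1)), lt_min (by linarith) (div_pos (by linarith) hA), ?_⟩
  intro l hl hle
  have hld : dist l 0 < δ := by
    rw [Real.dist_eq, sub_zero, abs_of_pos hl]
    have := le_trans hle (min_le_left _ _)
    linarith
  have hfl : ((-c' : ℝ) : EReal) ≤ f l := (hball hld).le
  refine le_trans (EReal.sub_le_sub le_rfl hfl) ?_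
  rw [← EReal.coe_sub, sub_neg_eq_add, EReal.coe_le_coe_iff]
  have h3 : l ≤ (c - c')/(|t|+1) := le_trans hle (min_le_right _ _)
  have h4 : ((c - c')/(|t|+1)) * (|t|+1) = c - c' := div_mul_cancel₀ _ (ne_of_gt hA)
  have h5 : t * l ≤ |t| * l := mul_le_mul_of_nonneg_right (le_abs_self t) hl.le
  nlinarith [abs_nonneg t, mul_le_mul_of_nonneg_left h3 (abs_nonneg t)]

lemma phi_neg_le (t m : ℝ) (hm : 0 < m) (hw : -(f 0) < ((t * m : ℝ) : EReal) - f m) :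
    ∀ l : ℝ, l < 0 → ((t * l : ℝ) : EReal) - f l ≤ -(f 0) := by
  intro l hl
  rcases eq_or_ne (f l) ⊤ with hfl | hfl
  · rw [hfl, EReal.sub_top]; exact bot_le
  have hml : (0:ℝ) < m - l := by linarith
  have hfm : f m ≠ ⊤ := ne_of_lt (hf.dom (Set.mem_Ioi.2 hm))
  have h := convR hf (m/(m-l)) (-l/(m-l)) hfl hfm (by positivity)
    (div_nonneg (by linarith) hml.le) (by field_simp; ring)
  rw [show m/(m-l)*l + (-l/(m-l))*m = 0 by field_simp; ring] at h
  have h0 : f 0 ≠ ⊤ := ne_top_of_le_ne_top (EReal.coe_ne_top _) h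
  rw [f_real' hf h0, f_real hf hm, ← EReal.coe_sub] at hw
  rw [← EReal.coe_neg] at hw
  have hwR : -(FR f 0) < t * m - FR f m := by exact_mod_cast hw
  rw [f_real' hf hfl, f_real' hf h0, ← EReal.coe_sub, ← EReal.coe_neg, EReal.coe_le_coe_iff]
  have hR : FR f 0 ≤ m/(m-l) * FR f l + (-l/(m-l)) * FR f m := by
    rw [f_real' hf h0] at h
    exact_mod_cast h
  have h' : FR f 0 * (m - l) ≤ m * FR f l + (-l) * FR f m := by
    have := mul_le_mul_of_nonneg_left hR hml.le
    rw [mul_add] at this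
    rw [show (m - l) * (m / (m - l) * FR f l) = m * FR f l by field_simp] at this
    rw [show (m - l) * (-l / (m - l) * FR f m) = (-l) * FR f m by field_simp] at this
    linarith
  by_contra hcon
  push_neg at hcon
  have hFl : FR f l < t * l + FR f 0 := by linarith
  have hFm : FR f m < t * m + FR f 0 := by linarith
  nlinarith [mul_lt_mul_of_pos_left hFl hm, mul_lt_mul_of_pos_left hFm (by linarith : (0:ℝ) < -l)]

lemma strict_of_witness (t : ℝ) (hgt : econj f t ≠ ⊤) (m : ℝ) (hm : 0 < m)
    (hw : -(f 0) < ((t * m : ℝ) : EReal) - f m) :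
    ∀ t', t < t' → econj f t < econj f t' := by
  intro t' ht'
  by_contra hcon
  push_neg at hcon
  have hfm : f m ≠ ⊤ := ne_of_lt (hf.dom (Set.mem_Ioi.2 hm))
  have hgb : econj f t ≠ ⊥ := econj_ne_bot hf t
  set G : ℝ := (econj f t).toReal with hGdef
  have hG : econj f t = ((G : ℝ) : EReal) := (EReal.coe_toReal hgt hgb).symm
  have hgbt : -(f 0) < econj f t := lt_of_lt_of_le hw (le_econj t m)
  obtain ⟨c, hc1, hc2⟩ := EReal.exists_between_coe_real hgbt
  obtain ⟨ε, hε, hsmall⟩ := phi_small hf t c hc1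
  set d : ℝ := t' - t with hd
  have hdpos : 0 < d := by rw [hd]; linarith
  have hbig : ∀ l : ℝ, ε < l → ((t * l : ℝ) : EReal) - f l ≤ ((G - d * ε : ℝ) : EReal) := by
    intro l hεl
    have hl : 0 < l := lt_trans hε hεl
    have e1 : ((t * l : ℝ) : EReal) - f l
        = (((t' * l : ℝ) : EReal) - f l) + ((t * l - t' * l : ℝ) : EReal) := by
      rw [f_real hf hl, ← EReal.coe_sub, ← EReal.coe_sub, ← EReal.coe_add, EReal.coe_eq_coe_iff]
      ring
    rw [e1]
    have h2 : (((t' * l : ℝ) : EReal) - f l) + ((t * l - t' * l : ℝ) : EReal)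
        ≤ econj f t' + ((-(d * ε) : ℝ) : EReal) := by
      refine add_le_add (le_econj t' l) ?_
      rw [EReal.coe_le_coe_iff]
      have : t * l - t' * l = -(d * l) := by rw [hd]; ring
      rw [this]
      nlinarith
    refine h2.trans ?_
    refine le_trans (add_le_add hcon le_rfl) ?_
    rw [hG, ← EReal.coe_add, EReal.coe_le_coe_iff]
    linarith
  have hfinal : econj f t ≤ ((max c (G - d * ε) : ℝ) : EReal) := by
    refine iSup_le fun l => ?_
    rcases lt_trichotomy l 0 with hl | hl | hl
    · refine le_trans (phi_neg_le hf t m hm hw l hl) ?_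
      refine le_trans hc1.le ?_
      exact_mod_cast le_max_left _ _
    · subst hl
      rcases eq_or_ne (f 0) ⊤ with h0 | h0
      · rw [h0, EReal.sub_top]; exact bot_le
      · rw [mul_zero, f_real' hf h0, ← EReal.coe_sub, zero_sub]
        have : ((-FR f 0 : ℝ) : EReal) ≤ (c : EReal) := by
          refine le_of_lt ?_
          rw [f_real' hf h0, ← EReal.coe_neg] at hc1
          exact hc1
        refine this.trans ?_
        exact_mod_cast le_max_left _ _
    · rcases le_or_gt l ε with hle | hgt'
      · refine (hsmall l hl hle).trans ?_
        exact_mod_cast le_max_left _ _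
      · refine (hbig l hgt').trans ?_
        exact_mod_cast le_max_right _ _
  rw [hG, EReal.coe_le_coe_iff] at hfinal
  have hcG : c < G := by
    rw [hG] at hc2
    exact_mod_cast hc2
  have : max c (G - d * ε) < G := max_lt hcG (by nlinarith)
  linarith

end Stmt18Aux

namespace Stmt18Aux
open Filter Set
variable {f : ℝ → EReal} (hf : NiceF f)
include hf

lemma three_point_e {x y z : ℝ} (hxy : x < y) (hyz : y < z) (hx : f x ≠ ⊤) (hz : f z ≠ ⊤) :
    f y ≤ ((((z - y) * FR f x + (y - x) * FR f z) / (z - x) : ℝ) : EReal) := by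
  have hzx : (0:ℝ) < z - x := by linarith
  have h := convR hf ((z-y)/(z-x)) ((y-x)/(z-x)) hx hz
    (div_nonneg (by linarith) hzx.le) (div_nonneg (by linarith) hzx.le)
    (by rw [← add_div, div_eq_one_iff_eq (ne_of_gt hzx)]; ring)
  rw [show (z-y)/(z-x) * x + (y-x)/(z-x) * z = y by
    rw [div_mul_eq_mul_div, div_mul_eq_mul_div, ← add_div,
      div_eq_iff (ne_of_gt hzx)]; ring] at h
  rw [show (z-y)/(z-x) * FR f x + (y-x)/(z-x) * FR f z
      = ((z - y) * FR f x + (y - x) * FR f z) / (z - x) by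
    rw [div_mul_eq_mul_div, div_mul_eq_mul_div, ← add_div]] at h
  exact h

lemma three_point {x y z : ℝ} (hxy : x < y) (hyz : y < z) (hx : f x ≠ ⊤) (hz : f z ≠ ⊤)
    (hy : f y ≠ ⊤) :
    FR f y * (z - x) ≤ (z - y) * FR f x + (y - x) * FR f z := by
  have hzx : (0:ℝ) < z - x := by linarith
  have h := three_point_e hf hxy hyz hx hz
  rw [f_real' hf hy, EReal.coe_le_coe_iff, le_div_iff₀ hzx] at h
  linarith

lemma bound1 {l : ℝ} (hl : 1 ≤ l) :
    FR f 1 + (2 * (FR f 1 - FR f (1/2))) * (l - 1) ≤ FR f l := by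
  rcases eq_or_lt_of_le hl with h | h
  · rw [← h]; simp
  · have hh : f (1/2 : ℝ) ≠ ⊤ := ne_of_lt (hf.dom (Set.mem_Ioi.2 (by norm_num)))
    have hltop : f l ≠ ⊤ := ne_of_lt (hf.dom (Set.mem_Ioi.2 (by linarith)))
    have h3 := three_point hf (by norm_num : (1/2:ℝ) < 1) h hh hltop (ne_of_lt (hf.dom (Set.mem_Ioi.2 one_pos)))
    linarith

lemma bound2 {l : ℝ} (h0 : 0 < l) (hl : l ≤ 1) :
    FR f 1 + (FR f 2 - FR f 1) * (l - 1) ≤ FR f l := by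
  rcases eq_or_lt_of_le hl with h | h
  · rw [h]; simp
  · have h2top : f (2:ℝ) ≠ ⊤ := ne_of_lt (hf.dom (Set.mem_Ioi.2 (by norm_num)))
    have hltop : f l ≠ ⊤ := ne_of_lt (hf.dom (Set.mem_Ioi.2 h0))
    have h3 := three_point hf h (by norm_num : (1:ℝ) < 2) hltop h2top (ne_of_lt (hf.dom (Set.mem_Ioi.2 one_pos)))
    linarith

lemma fzero_lt_of {l C t G : ℝ} (hcond : ∀ t', t < t' → econj f t < econj f t')
    (hbound : econj f t ≤ ((G : ℝ) : EReal)) (hCt : C < l * t - G) :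
    (C : EReal) < fzero f l := by
  have h4 : ((l * t : ℝ) : EReal) - fzeroStar f t ≤ fzero f l :=
    le_iSup (fun s : ℝ => ((l * s : ℝ) : EReal) - fzeroStar f s) t
  rw [fzeroStar, if_pos hcond] at h4
  refine lt_of_lt_of_le (lt_of_lt_of_le ?_ (EReal.sub_le_sub le_rfl hbound)) h4
  rw [← EReal.coe_sub, EReal.coe_lt_coe_iff]
  exact hCt

lemma part_iii
    (hb : Tendsto (fun l : ℝ => ((l⁻¹ : ℝ) : EReal) * (f l - f 0))
      (nhdsWithin 0 (Set.Ioi 0)) (nhds ⊥)) :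
    ∀ l : ℝ, l < 0 → fzero f l = ⊤ := by
  intro l hl
  have hlne : l ≠ 0 := ne_of_lt hl
  refine forall_lt_imp_eq_top fun C => ?_
  have hf1 : f 1 ≠ ⊤ := ne_of_lt (hf.dom (Set.mem_Ioi.2 one_pos))
  set F0 : ℝ := FR f 0
  set F1 : ℝ := FR f 1 with hF1
  set k1 : ℝ := 2 * (FR f 1 - FR f (1/2)) with hk1
  set k2 : ℝ := FR f 2 - FR f 1 with hk2
  rcases eq_or_ne (f 0) ⊤ with h0 | h0
  · -- f 0 = ⊤ : dom f = (0,∞)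
    have hnegdom : ∀ x : ℝ, x ≤ 0 → f x = ⊤ := by
      intro x hx
      rcases eq_or_lt_of_le hx with h | h
      · rw [h]; exact h0
      · by_contra hfx
        have hc := three_point_e hf h one_pos hfx hf1
        rw [h0] at hc
        exact absurd (top_le_iff.1 hc) (EReal.coe_ne_top _)
    have h00 : (0 : EReal) < f 0 := by
      rw [h0]; exact lt_top_iff_ne_top.2 (by simp)
    obtain ⟨δ, hδ, hball⟩ := Metric.eventually_nhds_iff.1 (hf.lsc 0 _ h00)
    set m2 : ℝ := F1 - |k2| with hm2
    set T0 : ℝ := min 0 (min (min k1 F1) (m2/δ)) with hT0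
    set t : ℝ := min T0 (C/l - 1) with ht
    have ht0 : t ≤ 0 := le_trans (min_le_left _ _) (min_le_left _ _)
    have htk1 : t ≤ k1 := le_trans (min_le_left _ _)
      (le_trans (min_le_right _ _) (le_trans (min_le_left _ _) (min_le_left _ _)))
    have htF1 : t ≤ F1 := le_trans (min_le_left _ _)
      (le_trans (min_le_right _ _) (le_trans (min_le_left _ _) (min_le_right _ _)))
    have htm2 : t * δ ≤ m2 := by
      have h1 : t ≤ m2/δ := le_trans (min_le_left _ _)
        (le_trans (min_le_right _ _) (min_le_right _ _))
      rw [← le_div_iff₀ hδ]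
      exact h1
    have htC : C < l * t := by
      have h1 : t ≤ C / l - 1 := min_le_right _ _
      have h2 : l * (C/l - 1) ≤ l * t := mul_le_mul_of_nonpos_left h1 hl.le
      have e : l * (C/l - 1) = C - l := by field_simp
      rw [e] at h2
      linarith
    have hboundA : econj f t ≤ ((0 : ℝ) : EReal) := by
      refine iSup_le fun x => ?_
      rcases le_or_gt x 0 with hx | hx
      · rw [hnegdom x hx, EReal.sub_top]; exact bot_le
      · rw [f_real hf hx, ← EReal.coe_sub, EReal.coe_le_coe_iff]
        have htx : t * x ≤ 0 := mul_nonpos_of_nonpos_of_nonneg ht0 hx.le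
        rcases lt_or_ge x δ with hxδ | hxδ
        · have hdist : dist x 0 < δ := by
            rw [Real.dist_eq, sub_zero, abs_of_pos hx]; exact hxδ
          have : (0 : EReal) < f x := hball hdist
          rw [f_real hf hx] at this
          have hFx : (0:ℝ) < FR f x := by exact_mod_cast this
          linarith
        · rcases le_or_gt x 1 with hx1 | hx1
          · have hb2 := bound2 hf hx hx1
            have habs : -|k2| ≤ k2 * (x - 1) := by
              nlinarith [le_abs_self k2, neg_abs_le k2]
            have htδ : t * x ≤ t * δ := mul_le_mul_of_nonpos_left hxδ ht0
            rw [← hk2] at hb2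
            have hFx : m2 ≤ FR f x := by rw [hm2]; linarith
            linarith
          · have hb1 := bound1 hf hx1.le
            rw [← hk1] at hb1
            have h5 : (t - k1) * x ≤ (t - k1) * 1 := by
              refine mul_le_mul_of_nonpos_left hx1.le (by linarith)
            nlinarith
    have hcond := strict_of_witness hf t
      (ne_top_of_le_ne_top (EReal.coe_ne_top _) hboundA) 1 one_pos
      (by rw [h0, f_real hf one_pos, ← EReal.coe_sub]
          exact lt_of_eq_of_lt (by simp) (EReal.bot_lt_coe _))
    exact fzero_lt_of hf hcond hboundA (by linarith)
  · -- f 0 real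
    have hsl := tendsto_sl hf h0 hb
    have hex : ∀ s : ℝ, ∃ m, 0 < m ∧ sl f m < s :=
      fun s => exists_sl_lt (EReal.bot_lt_coe s) hsl
    set G : ℝ := max (|k2| - F1) (max (-F0) (-F1)) with hG
    have hG2 : |k2| - F1 ≤ G := le_max_left _ _
    have hG0 : -F0 ≤ G := le_trans (le_max_left _ _) (le_max_right _ _)
    have hG1 : -F1 ≤ G := le_trans (le_max_right _ _) (le_max_right _ _)
    set T0 : ℝ := min 0 (min k1 F1) with hT0
    set t : ℝ := min T0 ((C + G)/l - 1) with ht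
    have ht0 : t ≤ 0 := le_trans (min_le_left _ _) (min_le_left _ _)
    have htk1 : t ≤ k1 := le_trans (min_le_left _ _)
      (le_trans (min_le_right _ _) (min_le_left _ _))
    have htF1 : t ≤ F1 := le_trans (min_le_left _ _)
      (le_trans (min_le_right _ _) (min_le_right _ _))
    have htC : C + G < l * t := by
      have h1 : t ≤ (C + G) / l - 1 := min_le_right _ _
      have h2 : l * ((C + G)/l - 1) ≤ l * t := mul_le_mul_of_nonpos_left h1 hl.le
      have e : l * ((C + G)/l - 1) = (C + G) - l := by field_simp
      rw [e] at h2
      linarith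
    obtain ⟨m, hm, hslm⟩ := hex t
    have hboundB : econj f t ≤ ((G : ℝ) : EReal) := by
      refine iSup_le fun x => ?_
      rcases lt_trichotomy x 0 with hx | hx | hx
      · rcases eq_or_ne (f x) ⊤ with hfx | hfx
        · rw [hfx, EReal.sub_top]; exact bot_le
        · have hnb := neg_slope_bound hf h0 hx hm hfx
          rw [f_real' hf hfx, ← EReal.coe_sub, EReal.coe_le_coe_iff]
          have hneg : x * (t - sl f m) ≤ 0 :=
            le_of_lt (mul_neg_of_neg_of_pos hx (by linarith))
          nlinarith
      · subst hx
        rw [mul_zero, f_real' hf h0, ← EReal.coe_sub, zero_sub, EReal.coe_le_coe_iff]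
        exact hG0
      · rw [f_real hf hx, ← EReal.coe_sub, EReal.coe_le_coe_iff]
        have htx : t * x ≤ 0 := mul_nonpos_of_nonpos_of_nonneg ht0 hx.le
        rcases le_or_gt x 1 with hx1 | hx1
        · have hb2 := bound2 hf hx hx1
          rw [← hk2] at hb2
          have habs : -|k2| ≤ k2 * (x - 1) := by
            nlinarith [le_abs_self k2, neg_abs_le k2]
          have : FR f x ≥ F1 - |k2| := by rw [hF1]; linarith
          linarith
        · have hb1 := bound1 hf hx1.le
          rw [← hk1] at hb1
          have h5 : (t - k1) * x ≤ (t - k1) * 1 := by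
            refine mul_le_mul_of_nonpos_left hx1.le (by linarith)
          nlinarith
    have hw : -(f 0) < ((t * m : ℝ) : EReal) - f m := by
      rw [f_real' hf h0, f_real hf hm, ← EReal.coe_sub, ← EReal.coe_neg,
        EReal.coe_lt_coe_iff]
      rw [sl, div_lt_iff₀ hm] at hslm
      linarith
    have hcond := strict_of_witness hf t
      (ne_top_of_le_ne_top (EReal.coe_ne_top _) hboundB) m hm hw
    exact fzero_lt_of hf hcond hboundB (by linarith)

end Stmt18Aux

/-- (i) `f₀ = f` on `[0,∞)`; (ii) if the right derivative `f'₊(0)` is a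
finite number `r`, then `f₀(λ) = r λ + f(0)` on `(−∞,0)` and `inf dom f₀* = r`;
(iii) if `f'₊(0) = −∞` then `f₀ = +∞` on `(−∞,0)`. -/
theorem stmt_18 (f : ℝ → EReal) (hf : NiceF f) :
    (∀ l : ℝ, 0 ≤ l → fzero f l = f l) ∧
    (∀ r : ℝ,
      Filter.Tendsto (fun l : ℝ => ((l⁻¹ : ℝ) : EReal) * (f l - f 0))
          (nhdsWithin 0 (Set.Ioi 0)) (nhds ((r : ℝ) : EReal)) →
      (∀ l : ℝ, l < 0 → fzero f l = ((r * l : ℝ) : EReal) + f 0) ∧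
        IsGLB (edom (fzeroStar f)) r) ∧
    (Filter.Tendsto (fun l : ℝ => ((l⁻¹ : ℝ) : EReal) * (f l - f 0))
        (nhdsWithin 0 (Set.Ioi 0)) (nhds ⊥) →
      ∀ l : ℝ, l < 0 → fzero f l = ⊤) :=
  ⟨fun l hl => Stmt18Aux.part_i hf l hl,
   fun r hr => Stmt18Aux.part_ii hf r hr,
   fun hb l hl => Stmt18Aux.part_iii hf hb l hl⟩
end
end
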